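/- Let F be a finite field of characteristic ≠ 3, E/F the cubic extension of finite fields, and β ∈ E a generator of E over F. Let Y ⊆ ℙ⁴_F be the cubic threefold defined by Norm_{E/F}(u + βv + β²w) + x·y·(x−y) = 0 in homogeneous coordinates (u, v, w, x, y). Then the singular locus of Y is the single closed point m of degree 3 (with residue field E) given by x = y = 0 and the vanishing of two of the three Galois conjugates of u + βv + β²w; geometrically Y has exactly three singular points, conjugate under Gal(E/F). -/
import Mathlib

open MvPolynomial

set_option maxHeartbeats 1600000


private lemma xy_aux {Ω : Type} [Field Ω] (h3 : (3:Ω) ≠ 0) {x y : Ω}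
    (h1 : 2*x*y = y^2) (h2 : x^2 = 2*x*y) : x = 0 ∧ y = 0 := by
  have hcase : x * (x - 2*y) = 0 := by linear_combination h2
  rcases mul_eq_zero.mp hcase with hx | hx
  · refine ⟨hx, ?_⟩
    have hy2 : y^2 = 0 := by rw [← h1, hx]; ring
    exact pow_eq_zero_iff two_ne_zero |>.mp hy2
  · have hx2 : x = 2*y := by linear_combination hx
    have h9 : 3 * y^2 = 0 := by rw [hx2] at h1; linear_combination h1
    have hy2 : y^2 = 0 := (mul_eq_zero.mp h9).resolve_left h3
    have hy : y = 0 := pow_eq_zero_iff two_ne_zero |>.mp hy2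
    exact ⟨by rw [hx2, hy, mul_zero], hy⟩

private lemma vand_aux {Ω : Type} [Field Ω] {b1 b2 b3 u1 u2 u3 : Ω}
    (h12 : b1 ≠ b2) (h13 : b1 ≠ b3) (h23 : b2 ≠ b3)
    (e1 : u1 + u2 + u3 = 0) (e2 : b1*u1 + b2*u2 + b3*u3 = 0)
    (e3 : b1^2*u1 + b2^2*u2 + b3^2*u3 = 0) : u1 = 0 ∧ u2 = 0 ∧ u3 = 0 := by
  have d12 : b1 - b2 ≠ 0 := sub_ne_zero.mpr h12
  have d13 : b1 - b3 ≠ 0 := sub_ne_zero.mpr h13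
  have d23 : b2 - b3 ≠ 0 := sub_ne_zero.mpr h23
  have k1 : u1 * ((b1-b2)*(b1-b3)) = 0 := by linear_combination e3 - (b2+b3)*e2 + b2*b3*e1
  have k2 : u2 * ((b2-b1)*(b2-b3)) = 0 := by linear_combination e3 - (b1+b3)*e2 + b1*b3*e1
  have k3 : u3 * ((b3-b1)*(b3-b2)) = 0 := by linear_combination e3 - (b1+b2)*e2 + b1*b2*e1
  refine ⟨?_, ?_, ?_⟩
  · rcases mul_eq_zero.mp k1 with h | h
    · exact h
    · exact absurd h (mul_ne_zero d12 d13)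
  · rcases mul_eq_zero.mp k2 with h | h
    · exact h
    · exact absurd h (mul_ne_zero (sub_ne_zero.mpr h12.symm) d23)
  · rcases mul_eq_zero.mp k3 with h | h
    · exact h
    · exact absurd h (mul_ne_zero (sub_ne_zero.mpr h13.symm) (sub_ne_zero.mpr h23.symm))

private lemma two_zero {Ω : Type} [Field Ω] {s t a0 a1 a2 : Ω} (hst : s ≠ t)
    (h1 : a0 + s*a1 + s^2*a2 = 0) (h2 : a0 + t*a1 + t^2*a2 = 0) :
    a1 = -(s+t)*a2 ∧ a0 = s*t*a2 := by
  have hd : s - t ≠ 0 := sub_ne_zero.mpr hst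
  have k1 : (s-t) * (a1 + (s+t)*a2) = 0 := by linear_combination h1 - h2
  have ha1 : a1 = -(s+t)*a2 := by
    rcases mul_eq_zero.mp k1 with h | h
    · exact absurd h hd
    · linear_combination h
  refine ⟨ha1, ?_⟩
  rw [ha1] at h1
  linear_combination h1

private lemma sing_iff {Ω : Type} [Field Ω] (h3 : (3:Ω) ≠ 0) {b1 b2 b3 : Ω}
    (h12 : b1 ≠ b2) (h13 : b1 ≠ b3) (h23 : b2 ≠ b3) (a : Fin 5 → Ω) :
    (eval a ((X 0 + C b1 * X 1 + C (b1^2) * X 2) *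
        ((X 0 + C b2 * X 1 + C (b2^2) * X 2) * (X 0 + C b3 * X 1 + C (b3^2) * X 2)) +
        X 3 * X 4 * (X 3 - X 4) : MvPolynomial (Fin 5) Ω) = 0 ∧
      ∀ i, eval a (pderiv i ((X 0 + C b1 * X 1 + C (b1^2) * X 2) *
        ((X 0 + C b2 * X 1 + C (b2^2) * X 2) * (X 0 + C b3 * X 1 + C (b3^2) * X 2)) +
        X 3 * X 4 * (X 3 - X 4) : MvPolynomial (Fin 5) Ω)) = 0)
    ↔ (a 3 = 0 ∧ a 4 = 0 ∧
        (((a 0 + b1 * a 1 + b1^2 * a 2 = 0) ∧ (a 0 + b2 * a 1 + b2^2 * a 2 = 0)) ∨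
         ((a 0 + b1 * a 1 + b1^2 * a 2 = 0) ∧ (a 0 + b3 * a 1 + b3^2 * a 2 = 0)) ∨
         ((a 0 + b2 * a 1 + b2^2 * a 2 = 0) ∧ (a 0 + b3 * a 1 + b3^2 * a 2 = 0)))) := by
  constructor
  · rintro ⟨he, hd⟩
    have t0 := hd 0
    have t1 := hd 1
    have t2 := hd 2
    have t3 := hd 3
    have t4 := hd 4
    simp [pderiv_mul] at t0 t1 t2 t3 t4 he
    have hxy1 : 2 * a 3 * a 4 = (a 4)^2 := by linear_combination t3
    have hxy2 : (a 3)^2 = 2 * a 3 * a 4 := by linear_combination t4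
    obtain ⟨hx, hy⟩ := xy_aux h3 hxy1 hxy2
    have e1 : (a 0 + b2 * a 1 + b2^2 * a 2) * (a 0 + b3 * a 1 + b3^2 * a 2) +
        (a 0 + b1 * a 1 + b1^2 * a 2) * (a 0 + b3 * a 1 + b3^2 * a 2) +
        (a 0 + b1 * a 1 + b1^2 * a 2) * (a 0 + b2 * a 1 + b2^2 * a 2) = 0 := by
      linear_combination t0
    have e2 : b1 * ((a 0 + b2 * a 1 + b2^2 * a 2) * (a 0 + b3 * a 1 + b3^2 * a 2)) +
        b2 * ((a 0 + b1 * a 1 + b1^2 * a 2) * (a 0 + b3 * a 1 + b3^2 * a 2)) +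
        b3 * ((a 0 + b1 * a 1 + b1^2 * a 2) * (a 0 + b2 * a 1 + b2^2 * a 2)) = 0 := by
      linear_combination t1
    have e3 : b1^2 * ((a 0 + b2 * a 1 + b2^2 * a 2) * (a 0 + b3 * a 1 + b3^2 * a 2)) +
        b2^2 * ((a 0 + b1 * a 1 + b1^2 * a 2) * (a 0 + b3 * a 1 + b3^2 * a 2)) +
        b3^2 * ((a 0 + b1 * a 1 + b1^2 * a 2) * (a 0 + b2 * a 1 + b2^2 * a 2)) = 0 := by
      linear_combination t2
    obtain ⟨k1, k2, k3⟩ := vand_aux h12 h13 h23 e1 e2 e3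
    by_cases hA1 : a 0 + b1 * a 1 + b1^2 * a 2 = 0
    · rcases mul_eq_zero.mp k1 with h | h
      · exact ⟨hx, hy, Or.inl ⟨hA1, h⟩⟩
      · exact ⟨hx, hy, Or.inr (Or.inl ⟨hA1, h⟩)⟩
    · have hA2 : a 0 + b2 * a 1 + b2^2 * a 2 = 0 := (mul_eq_zero.mp k3).resolve_left hA1
      have hA3 : a 0 + b3 * a 1 + b3^2 * a 2 = 0 := (mul_eq_zero.mp k2).resolve_left hA1
      exact ⟨hx, hy, Or.inr (Or.inr ⟨hA2, hA3⟩)⟩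
  · rintro ⟨hx, hy, hc⟩
    rcases hc with ⟨hA, hB⟩ | ⟨hA, hB⟩ | ⟨hA, hB⟩ <;>
      [obtain ⟨ha1, ha0⟩ := two_zero h12 hA hB;
       obtain ⟨ha1, ha0⟩ := two_zero h13 hA hB;
       obtain ⟨ha1, ha0⟩ := two_zero h23 hA hB] <;>
    · refine ⟨?_, ?_⟩
      · simp
        rw [hx, hy, ha0, ha1]
        ring
      · have d0 : eval a (pderiv (0 : Fin 5) ((X 0 + C b1 * X 1 + C (b1^2) * X 2) *
            ((X 0 + C b2 * X 1 + C (b2^2) * X 2) * (X 0 + C b3 * X 1 + C (b3^2) * X 2)) +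
            X 3 * X 4 * (X 3 - X 4) : MvPolynomial (Fin 5) Ω)) = 0 := by
          simp [pderiv_mul]
          rw [ha0, ha1]; ring
        have d1 : eval a (pderiv (1 : Fin 5) ((X 0 + C b1 * X 1 + C (b1^2) * X 2) *
            ((X 0 + C b2 * X 1 + C (b2^2) * X 2) * (X 0 + C b3 * X 1 + C (b3^2) * X 2)) +
            X 3 * X 4 * (X 3 - X 4) : MvPolynomial (Fin 5) Ω)) = 0 := by
          simp [pderiv_mul]
          rw [ha0, ha1]; ring
        have d2 : eval a (pderiv (2 : Fin 5) ((X 0 + C b1 * X 1 + C (b1^2) * X 2) *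
            ((X 0 + C b2 * X 1 + C (b2^2) * X 2) * (X 0 + C b3 * X 1 + C (b3^2) * X 2)) +
            X 3 * X 4 * (X 3 - X 4) : MvPolynomial (Fin 5) Ω)) = 0 := by
          simp [pderiv_mul]
          rw [ha0, ha1]; ring
        have d3 : eval a (pderiv (3 : Fin 5) ((X 0 + C b1 * X 1 + C (b1^2) * X 2) *
            ((X 0 + C b2 * X 1 + C (b2^2) * X 2) * (X 0 + C b3 * X 1 + C (b3^2) * X 2)) +
            X 3 * X 4 * (X 3 - X 4) : MvPolynomial (Fin 5) Ω)) = 0 := by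
          simp [pderiv_mul]
          rw [hx, hy]; ring
        have d4 : eval a (pderiv (4 : Fin 5) ((X 0 + C b1 * X 1 + C (b1^2) * X 2) *
            ((X 0 + C b2 * X 1 + C (b2^2) * X 2) * (X 0 + C b3 * X 1 + C (b3^2) * X 2)) +
            X 3 * X 4 * (X 3 - X 4) : MvPolynomial (Fin 5) Ω)) = 0 := by
          simp [pderiv_mul]
          rw [hx, hy]; ring
        intro i
        fin_cases i
        exacts [d0, d1, d2, d3, d4]

/-- The action of a field automorphism on points of projective space. -/
noncomputable def mapPoint {Ω F : Type} [Field Ω] [Field F] [Algebra F Ω]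
    (g : Ω ≃ₐ[F] Ω) (p : Projectivization Ω (Fin 5 → Ω)) :
    Projectivization Ω (Fin 5 → Ω) :=
  Projectivization.mk Ω (fun i => g (p.rep i))
    (fun h => p.rep_nonzero (funext fun i => g.injective (by
      simpa using congrFun h i)))

private lemma mapPoint_mk {Ω F : Type} [Field Ω] [Field F] [Algebra F Ω]
    (g : Ω ≃ₐ[F] Ω) (v : Fin 5 → Ω) (hv : v ≠ 0) (hgv : (fun i => g (v i)) ≠ 0) :
    mapPoint g (Projectivization.mk Ω v hv) = Projectivization.mk Ω (fun i => g (v i)) hgv := by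
  obtain ⟨a, ha⟩ := Projectivization.exists_smul_eq_mk_rep Ω v hv
  unfold mapPoint
  rw [Projectivization.mk_eq_mk_iff']
  refine ⟨g a, ?_⟩
  funext i
  have hrep : (Projectivization.mk Ω v hv).rep i = (a : Ω) * v i := by
    rw [← congrFun ha i]; simp [Units.smul_def]
  simp only [Pi.smul_apply, smul_eq_mul, hrep, map_mul]

private lemma mapPoint_mapPoint {Ω F : Type} [Field Ω] [Field F] [Algebra F Ω]
    (g h : Ω ≃ₐ[F] Ω) (p : Projectivization Ω (Fin 5 → Ω)) :
    mapPoint g (mapPoint h p) = mapPoint (h.trans g) p := by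
  have h1 : mapPoint h p = Projectivization.mk Ω (fun i => h (p.rep i))
      (fun hz => p.rep_nonzero (funext fun i => h.injective (by simpa using congrFun hz i))) := rfl
  rw [h1, mapPoint_mk g _ _ (fun hz => p.rep_nonzero (funext fun i => by
    have := congrFun hz i
    simp only [Pi.zero_apply] at this ⊢
    exact h.injective (g.injective (by simpa using this))))]
  unfold mapPoint
  rw [Projectivization.mk_eq_mk_iff']
  exact ⟨1, funext fun i => by simp⟩

private lemma mapPoint_refl {Ω F : Type} [Field Ω] [Field F] [Algebra F Ω]
    (p : Projectivization Ω (Fin 5 → Ω)) :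
    mapPoint (AlgEquiv.refl (R := F) (A₁ := Ω)) p = p := by
  unfold mapPoint
  conv_rhs => rw [← Projectivization.mk_rep p]
  rw [Projectivization.mk_eq_mk_iff']
  exact ⟨1, funext fun i => by simp⟩

private lemma pt_congr {Ω : Type} [Field Ω] {s t u w : Ω}
    (hv1 : (![s*t, -(s+t), 1, 0, 0] : Fin 5 → Ω) ≠ 0)
    (hv2 : (![u*w, -(u+w), 1, 0, 0] : Fin 5 → Ω) ≠ 0)
    (h1 : s + t = u + w) (h2 : s * t = u * w) :
    Projectivization.mk Ω ![s*t, -(s+t), 1, 0, 0] hv1 =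
      Projectivization.mk Ω ![u*w, -(u+w), 1, 0, 0] hv2 := by
  rw [Projectivization.mk_eq_mk_iff']
  exact ⟨1, funext fun i => by fin_cases i <;> simp [h1, h2]⟩

private lemma pt_eq_iff {Ω : Type} [Field Ω] {s t u w : Ω}
    {hv1 : (![s*t, -(s+t), 1, 0, 0] : Fin 5 → Ω) ≠ 0}
    {hv2 : (![u*w, -(u+w), 1, 0, 0] : Fin 5 → Ω) ≠ 0}
    (h : Projectivization.mk Ω ![s*t, -(s+t), 1, 0, 0] hv1 =
      Projectivization.mk Ω ![u*w, -(u+w), 1, 0, 0] hv2) :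
    s + t = u + w ∧ s * t = u * w := by
  rw [Projectivization.mk_eq_mk_iff'] at h
  obtain ⟨a, ha⟩ := h
  have h0 := congrFun ha 0
  have h1 := congrFun ha 1
  have h2 := congrFun ha 2
  simp at h0 h1 h2
  subst h2
  rw [one_mul] at h0 h1
  exact ⟨by linear_combination h1, by linear_combination -h0⟩

private lemma mapPoint_pt {Ω F : Type} [Field Ω] [Field F] [Algebra F Ω]
    (g : Ω ≃ₐ[F] Ω) (s t : Ω)
    (hv : (![s*t, -(s+t), 1, 0, 0] : Fin 5 → Ω) ≠ 0)
    (hv2 : (![g s * g t, -(g s + g t), 1, 0, 0] : Fin 5 → Ω) ≠ 0) :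
    mapPoint g (Projectivization.mk Ω ![s*t, -(s+t), 1, 0, 0] hv) =
      Projectivization.mk Ω ![g s * g t, -(g s + g t), 1, 0, 0] hv2 := by
  rw [mapPoint_mk g _ hv (by
    intro hz
    have := congrFun hz 2
    simp at this)]
  rw [Projectivization.mk_eq_mk_iff']
  exact ⟨1, funext fun i => by fin_cases i <;> simp⟩

private lemma eq_pt {Ω : Type} [Field Ω] (p : Projectivization Ω (Fin 5 → Ω)) {s t : Ω}
    (hst : s ≠ t)
    (hv : (![s*t, -(s+t), 1, 0, 0] : Fin 5 → Ω) ≠ 0)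
    (h3 : p.rep 3 = 0) (h4 : p.rep 4 = 0)
    (hA : p.rep 0 + s * p.rep 1 + s^2 * p.rep 2 = 0)
    (hB : p.rep 0 + t * p.rep 1 + t^2 * p.rep 2 = 0) :
    p = Projectivization.mk Ω ![s*t, -(s+t), 1, 0, 0] hv := by
  obtain ⟨ha1, ha0⟩ := two_zero hst hA hB
  have hw : p.rep 2 ≠ 0 := by
    intro hw
    apply p.rep_nonzero
    funext i
    fin_cases i <;> simp [ha0, ha1, h3, h4, hw]
  conv_lhs => rw [← Projectivization.mk_rep p]
  rw [Projectivization.mk_eq_mk_iff']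
  refine ⟨p.rep 2, funext fun i => ?_⟩
  fin_cases i <;> simp only [Pi.smul_apply, smul_eq_mul] <;>
    simp [ha0, ha1, h3, h4] <;> ring



/-- Let `F` be a finite field of characteristic `≠ 3`,
`E/F` the cubic extension and `β` a generator of `E/F`. The cubic threefold
`Y ⊆ ℙ⁴` defined by `Norm_{E/F}(u + βv + β²w) + xy(x-y) = 0` has, over an
algebraic closure `Ω`, exactly three singular points: the points with
`x = y = 0` where two of the three conjugate linear forms vanish; they are
permuted transitively by the Galois group. -/
theorem stmt19 (F : Type) [Field F] [Finite F] (hchar : ringChar F ≠ 3)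
    (E : Type) [Field E] [Algebra F E] [FiniteDimensional F E]
    (hdeg : Module.finrank F E = 3)
    (β : E) (hβ : Algebra.adjoin F {β} = ⊤)
    (Ω : Type) [Field Ω] [Algebra F Ω] [Algebra E Ω] [IsScalarTower F E Ω]
    [IsAlgClosed Ω] :
    let f : MvPolynomial (Fin 5) Ω :=
      (∏ σ : E →ₐ[F] Ω, (X 0 + C (σ β) * X 1 + C (σ β ^ 2) * X 2)) +
        X 3 * X 4 * (X 3 - X 4)
    let Sing : Set (Projectivization Ω (Fin 5 → Ω)) :=
      {p | eval p.rep f = 0 ∧ ∀ i, eval p.rep (pderiv i f) = 0}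
    -- the singular locus consists of the points with `x = y = 0` where two
    -- distinct conjugates of the linear form `u + βv + β²w` vanish
    Sing = {p | p.rep 3 = 0 ∧ p.rep 4 = 0 ∧
        ∃ σ τ : E →ₐ[F] Ω, σ ≠ τ ∧
          p.rep 0 + σ β * p.rep 1 + σ β ^ 2 * p.rep 2 = 0 ∧
          p.rep 0 + τ β * p.rep 1 + τ β ^ 2 * p.rep 2 = 0} ∧
    -- there are exactly three singular points
    Sing.ncard = 3 ∧
    -- and they are conjugate under the Galois group `Gal(Ω/F)`
    (∀ p ∈ Sing, ∀ q ∈ Sing, ∃ g : Ω ≃ₐ[F] Ω, mapPoint g p = q) := by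
  intro f Sing
  classical
  haveI : Fintype F := Fintype.ofFinite F
  -- the three embeddings
  have hcard : Fintype.card (E →ₐ[F] Ω) = 3 := by
    rw [AlgHom.card F E Ω, hdeg]
  obtain ⟨σ1, σ2, σ3, h12, h13, h23, huniv⟩ :=
    Finset.card_eq_three.mp (by rw [Finset.card_univ, hcard] :
      (Finset.univ : Finset (E →ₐ[F] Ω)).card = 3)
  have hroot : ∀ σ τ : E →ₐ[F] Ω, σ β = τ β → σ = τ := by
    intro σ τ h
    have hle : Algebra.adjoin F {β} ≤ AlgHom.equalizer σ τ :=
      Algebra.adjoin_le (by simpa [Set.singleton_subset_iff, AlgHom.mem_equalizer] using h)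
    rw [hβ] at hle
    ext x
    exact hle (Algebra.mem_top (A := E) (x := x))
  have hb12 : σ1 β ≠ σ2 β := fun h => h12 (hroot _ _ h)
  have hb13 : σ1 β ≠ σ3 β := fun h => h13 (hroot _ _ h)
  have hb23 : σ2 β ≠ σ3 β := fun h => h23 (hroot _ _ h)
  -- characteristic not 3
  have h3F : (3:F) ≠ 0 := by
    have hprime : (ringChar F).Prime := CharP.char_is_prime F (ringChar F)
    intro h
    have hdvd : (ringChar F) ∣ 3 := by
      rw [← CharP.cast_eq_zero_iff F (ringChar F) 3]
      exact_mod_cast h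
    exact hchar ((Nat.prime_dvd_prime_iff_eq hprime (by norm_num)).mp hdvd)
  have h3Ω : (3:Ω) ≠ 0 := by
    intro h
    apply h3F
    apply (algebraMap F Ω).injective
    rw [map_ofNat, map_zero, h]
  -- the polynomial explicitly
  have hf : f = (X 0 + C (σ1 β) * X 1 + C (σ1 β ^ 2) * X 2) *
      ((X 0 + C (σ2 β) * X 1 + C (σ2 β ^ 2) * X 2) *
        (X 0 + C (σ3 β) * X 1 + C (σ3 β ^ 2) * X 2)) +
      X 3 * X 4 * (X 3 - X 4) := by
    show (∏ σ : E →ₐ[F] Ω, (X 0 + C (σ β) * X 1 + C (σ β ^ 2) * X 2)) +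
        X 3 * X 4 * (X 3 - X 4) = _
    rw [show (Finset.univ : Finset (E →ₐ[F] Ω)) = {σ1, σ2, σ3} from huniv,
      Finset.prod_insert (by simp [h12, h13]), Finset.prod_pair h23]
  have hSing : ∀ pnt : Projectivization Ω (Fin 5 → Ω), pnt ∈ Sing ↔
      (pnt.rep 3 = 0 ∧ pnt.rep 4 = 0 ∧
        (((pnt.rep 0 + σ1 β * pnt.rep 1 + (σ1 β)^2 * pnt.rep 2 = 0) ∧
          (pnt.rep 0 + σ2 β * pnt.rep 1 + (σ2 β)^2 * pnt.rep 2 = 0)) ∨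
         ((pnt.rep 0 + σ1 β * pnt.rep 1 + (σ1 β)^2 * pnt.rep 2 = 0) ∧
          (pnt.rep 0 + σ3 β * pnt.rep 1 + (σ3 β)^2 * pnt.rep 2 = 0)) ∨
         ((pnt.rep 0 + σ2 β * pnt.rep 1 + (σ2 β)^2 * pnt.rep 2 = 0) ∧
          (pnt.rep 0 + σ3 β * pnt.rep 1 + (σ3 β)^2 * pnt.rep 2 = 0)))) := by
    intro pnt
    have hiff : pnt ∈ Sing ↔
        (eval pnt.rep f = 0 ∧ ∀ i, eval pnt.rep (pderiv i f) = 0) := Iff.rfl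
    rw [hiff, hf]
    exact sing_iff h3Ω hb12 hb13 hb23 pnt.rep
  -- Part 1
  have goal1 : Sing = {p : Projectivization Ω (Fin 5 → Ω) |
      p.rep 3 = 0 ∧ p.rep 4 = 0 ∧
      ∃ σ τ : E →ₐ[F] Ω, σ ≠ τ ∧
        p.rep 0 + σ β * p.rep 1 + σ β ^ 2 * p.rep 2 = 0 ∧
        p.rep 0 + τ β * p.rep 1 + τ β ^ 2 * p.rep 2 = 0} := by
    ext pnt
    rw [hSing pnt, Set.mem_setOf_eq]
    constructor
    · rintro ⟨h3', h4', hc⟩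
      refine ⟨h3', h4', ?_⟩
      rcases hc with ⟨hA, hB⟩ | ⟨hA, hB⟩ | ⟨hA, hB⟩
      · exact ⟨σ1, σ2, h12, hA, hB⟩
      · exact ⟨σ1, σ3, h13, hA, hB⟩
      · exact ⟨σ2, σ3, h23, hA, hB⟩
    · rintro ⟨h3', h4', σ, τ, hστ, hA, hB⟩
      refine ⟨h3', h4', ?_⟩
      have hσ : σ = σ1 ∨ σ = σ2 ∨ σ = σ3 := by
        have := Finset.mem_univ σ
        rw [huniv] at this
        simpa using this
      have hτ : τ = σ1 ∨ τ = σ2 ∨ τ = σ3 := by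
        have := Finset.mem_univ τ
        rw [huniv] at this
        simpa using this
      rcases hσ with rfl | rfl | rfl <;> rcases hτ with rfl | rfl | rfl <;> tauto
  -- the three singular points
  have hvne : ∀ s t : Ω, (![s*t, -(s+t), 1, 0, 0] : Fin 5 → Ω) ≠ 0 := by
    intro s t h
    have := congrFun h 2
    simp at this
  set P12 := Projectivization.mk Ω ![σ1 β * σ2 β, -(σ1 β + σ2 β), 1, 0, 0] (hvne _ _) with hP12
  set P13 := Projectivization.mk Ω ![σ1 β * σ3 β, -(σ1 β + σ3 β), 1, 0, 0] (hvne _ _) with hP13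
  set P23 := Projectivization.mk Ω ![σ2 β * σ3 β, -(σ2 β + σ3 β), 1, 0, 0] (hvne _ _) with hP23
  have hmem : ∀ σ τ : E →ₐ[F] Ω, σ ≠ τ →
      (Projectivization.mk Ω ![σ β * τ β, -(σ β + τ β), 1, 0, 0] (hvne _ _)) ∈ Sing := by
    intro σ τ hστ
    obtain ⟨a, ha⟩ := Projectivization.exists_smul_eq_mk_rep Ω
      (![σ β * τ β, -(σ β + τ β), 1, 0, 0] : Fin 5 → Ω) (hvne _ _)
    have hrep : ∀ i, (Projectivization.mk Ω
        (![σ β * τ β, -(σ β + τ β), 1, 0, 0] : Fin 5 → Ω) (hvne _ _)).rep i =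
        (a:Ω) * (![σ β * τ β, -(σ β + τ β), 1, 0, 0] : Fin 5 → Ω) i := by
      intro i; rw [← congrFun ha i]; simp [Units.smul_def]
    rw [goal1]
    refine ⟨?_, ?_, σ, τ, hστ, ?_, ?_⟩
    · rw [hrep 3]; simp
    · rw [hrep 4]; simp
    · rw [hrep 0, hrep 1, hrep 2]; simp; ring
    · rw [hrep 0, hrep 1, hrep 2]; simp; ring
  have hne1 : P12 ≠ P13 := fun h => hb23 (by have := (pt_eq_iff h).1; linear_combination this)
  have hne2 : P12 ≠ P23 := fun h => hb13 (by have := (pt_eq_iff h).1; linear_combination this)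
  have hne3 : P13 ≠ P23 := fun h => hb12 (by have := (pt_eq_iff h).1; linear_combination this)
  have goal2 : Sing = {P12, P13, P23} := by
    ext pnt
    rw [hSing pnt]
    constructor
    · rintro ⟨h3', h4', hc⟩
      simp only [Set.mem_insert_iff, Set.mem_singleton_iff]
      rcases hc with ⟨hA, hB⟩ | ⟨hA, hB⟩ | ⟨hA, hB⟩
      · exact Or.inl (eq_pt pnt hb12 (hvne _ _) h3' h4' hA hB)
      · exact Or.inr (Or.inl (eq_pt pnt hb13 (hvne _ _) h3' h4' hA hB))
      · exact Or.inr (Or.inr (eq_pt pnt hb23 (hvne _ _) h3' h4' hA hB))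
    · intro h
      have h' : pnt = P12 ∨ pnt = P13 ∨ pnt = P23 := by simpa using h
      rcases h' with rfl | rfl | rfl
      · exact (hSing P12).mp (hmem σ1 σ2 h12)
      · exact (hSing P13).mp (hmem σ1 σ3 h13)
      · exact (hSing P23).mp (hmem σ2 σ3 h23)
  have goalcard : Sing.ncard = 3 := by
    rw [goal2, Set.ncard_insert_of_notMem (by simp [hne1, hne2]),
      Set.ncard_insert_of_notMem (by simp [hne3]), Set.ncard_singleton]
  -- Frobenius
  haveI : CharP F (ringChar F) := ringChar.charP F
  haveI hFp : Fact (ringChar F).Prime := ⟨CharP.char_is_prime F (ringChar F)⟩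
  obtain ⟨n, -, hqcard⟩ := FiniteField.card F (ringChar F)
  haveI : CharP Ω (ringChar F) :=
    charP_of_injective_algebraMap (algebraMap F Ω).injective (ringChar F)
  have hφcomm : ∀ c : F, (iterateFrobeniusEquiv Ω (ringChar F) (n:ℕ)) (algebraMap F Ω c) =
      algebraMap F Ω c := by
    intro c
    rw [iterateFrobeniusEquiv_def, ← hqcard, ← map_pow, FiniteField.pow_card]
  let φ : Ω ≃ₐ[F] Ω := AlgEquiv.ofRingEquiv hφcomm
  have hφ : ∀ x : Ω, φ x = x ^ Fintype.card F := by
    intro x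
    show (iterateFrobeniusEquiv Ω (ringChar F) (n:ℕ)) x = _
    rw [iterateFrobeniusEquiv_def, ← hqcard]
  have hβq : β ^ Fintype.card F ≠ β := by
    intro hfix
    have hβmem : ∃ c : F, algebraMap F E c = β := by
      by_contra hno
      push_neg at hno
      have hPne : (Polynomial.X ^ Fintype.card F - Polynomial.X : Polynomial E) ≠ 0 :=
        FiniteField.X_pow_card_sub_X_ne_zero E Fintype.one_lt_card
      have hdegP : (Polynomial.X ^ Fintype.card F - Polynomial.X : Polynomial E).natDegree =
          Fintype.card F :=
        FiniteField.X_pow_card_sub_X_natDegree_eq E Fintype.one_lt_card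
      have hsub : insert β (Finset.image (algebraMap F E) Finset.univ) ⊆
          (Polynomial.X ^ Fintype.card F - Polynomial.X : Polynomial E).roots.toFinset := by
        intro x hx
        rw [Multiset.mem_toFinset, Polynomial.mem_roots hPne]
        rcases Finset.mem_insert.mp hx with rfl | hx
        · simp [Polynomial.IsRoot, hfix]
        · obtain ⟨c, -, rfl⟩ := Finset.mem_image.mp hx
          have hcq : (algebraMap F E c) ^ Fintype.card F = algebraMap F E c := by
            rw [← map_pow, FiniteField.pow_card]
          simp [Polynomial.IsRoot, hcq]
      have hcard1 : Fintype.card F + 1 ≤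
          ((Polynomial.X ^ Fintype.card F - Polynomial.X : Polynomial E).roots.toFinset).card := by
        have hc : (insert β (Finset.image (algebraMap F E) Finset.univ)).card =
            Fintype.card F + 1 := by
          rw [Finset.card_insert_of_notMem (by
              intro hmem2
              obtain ⟨c, -, hc⟩ := Finset.mem_image.mp hmem2
              exact hno c hc),
            Finset.card_image_of_injective _ (algebraMap F E).injective, Finset.card_univ]
        rw [← hc]
        exact Finset.card_le_card hsub
      have hcard2 :
          ((Polynomial.X ^ Fintype.card F - Polynomial.X : Polynomial E).roots.toFinset).card ≤
          Fintype.card F :=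
        le_trans (Multiset.toFinset_card_le _)
          (le_trans (Polynomial.card_roots' _) (le_of_eq hdegP))
      omega
    obtain ⟨c, hc⟩ := hβmem
    have hle : Algebra.adjoin F {β} ≤ ⊥ :=
      Algebra.adjoin_le (by
        rw [Set.singleton_subset_iff]
        exact ⟨c, hc⟩)
    rw [hβ] at hle
    have hbt : (⊥ : Subalgebra F E) = ⊤ := top_le_iff.mp hle
    have h1 := Subalgebra.bot_eq_top_iff_finrank_eq_one.mp hbt
    rw [hdeg] at h1
    omega
  have hfpf : ∀ σ : E →ₐ[F] Ω, φ.toAlgHom.comp σ ≠ σ := by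
    intro σ h
    apply hβq
    have hb : φ (σ β) = σ β := by
      conv_rhs => rw [← h]
      rfl
    rw [hφ, ← map_pow] at hb
    exact σ.injective hb
  have hΦinj : ∀ σ τ : E →ₐ[F] Ω, φ.toAlgHom.comp σ = φ.toAlgHom.comp τ → σ = τ := by
    intro σ τ h
    ext x
    have h2 := congrArg (fun ψ : E →ₐ[F] Ω => ψ x) h
    simp only [AlgHom.comp_apply] at h2
    exact φ.injective h2
  have htriple : ∀ σ : E →ₐ[F] Ω, σ = σ1 ∨ σ = σ2 ∨ σ = σ3 := by
    intro σ
    have := Finset.mem_univ σ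
    rw [huniv] at this
    simpa using this
  have hswap : ∀ s t : Ω, Projectivization.mk Ω ![s*t, -(s+t), 1, 0, 0] (hvne _ _) =
      Projectivization.mk Ω ![t*s, -(t+s), 1, 0, 0] (hvne _ _) :=
    fun s t => pt_congr _ _ (by ring) (by ring)
  have hstep : ∀ σ τ σ' τ' : E →ₐ[F] Ω, φ.toAlgHom.comp σ = σ' → φ.toAlgHom.comp τ = τ' →
      mapPoint φ (Projectivization.mk Ω ![σ β * τ β, -(σ β + τ β), 1, 0, 0] (hvne _ _)) =
        Projectivization.mk Ω ![σ' β * τ' β, -(σ' β + τ' β), 1, 0, 0] (hvne _ _) := by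
    intro σ τ σ' τ' h1 h2
    have e1 : φ (σ β) = σ' β := by rw [← h1]; rfl
    have e2 : φ (τ β) = τ' β := by rw [← h2]; rfl
    rw [mapPoint_pt φ (σ β) (τ β) (hvne _ _) (hvne _ _)]
    exact pt_congr _ _ (by rw [e1, e2]) (by rw [e1, e2])
  obtain ⟨u, cu1, cu2, cu3⟩ : ∃ u : Ω ≃ₐ[F] Ω,
      mapPoint u P12 = P23 ∧ mapPoint u P23 = P13 ∧ mapPoint u P13 = P12 := by
    rcases htriple (φ.toAlgHom.comp σ1) with hA1 | hA1 | hA1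
    · exact absurd hA1 (hfpf σ1)
    · -- case A : Φσ1 = σ2
      have hA2 : φ.toAlgHom.comp σ2 = σ3 := by
        rcases htriple (φ.toAlgHom.comp σ2) with h | h | h
        · exfalso
          rcases htriple (φ.toAlgHom.comp σ3) with h' | h' | h'
          · exact h23 (hΦinj _ _ (h'.trans h.symm)).symm
          · exact h13 (hΦinj _ _ (h'.trans hA1.symm)).symm
          · exact hfpf σ3 h'
        · exact absurd h (hfpf σ2)
        · exact h
      have hA3 : φ.toAlgHom.comp σ3 = σ1 := by
        rcases htriple (φ.toAlgHom.comp σ3) with h | h | h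
        · exact h
        · exact absurd (hΦinj _ _ (hA1.trans h.symm)) h13
        · exact absurd h (hfpf σ3)
      exact ⟨φ, hstep σ1 σ2 σ2 σ3 hA1 hA2,
        (hstep σ2 σ3 σ3 σ1 hA2 hA3).trans (hswap (σ3 β) (σ1 β)),
        (hstep σ1 σ3 σ2 σ1 hA1 hA3).trans (hswap (σ2 β) (σ1 β))⟩
    · -- case B : Φσ1 = σ3
      have hB3 : φ.toAlgHom.comp σ3 = σ2 := by
        rcases htriple (φ.toAlgHom.comp σ3) with h | h | h
        · exfalso
          rcases htriple (φ.toAlgHom.comp σ2) with h' | h' | h'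
          · exact h23 (hΦinj _ _ (h'.trans h.symm))
          · exact hfpf σ2 h'
          · exact h12 (hΦinj _ _ (hA1.trans h'.symm))
        · exact h
        · exact absurd h (hfpf σ3)
      have hB2 : φ.toAlgHom.comp σ2 = σ1 := by
        rcases htriple (φ.toAlgHom.comp σ2) with h | h | h
        · exact h
        · exact absurd h (hfpf σ2)
        · exact absurd (hΦinj _ _ (hA1.trans h.symm)) h12
      have b1 : mapPoint φ P12 = P13 := (hstep σ1 σ2 σ3 σ1 hA1 hB2).trans (hswap _ _)
      have b2 : mapPoint φ P13 = P23 := (hstep σ1 σ3 σ3 σ2 hA1 hB3).trans (hswap _ _)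
      have b3 : mapPoint φ P23 = P12 := hstep σ2 σ3 σ1 σ2 hB2 hB3
      exact ⟨φ.trans φ, by rw [← mapPoint_mapPoint, b1, b2],
        by rw [← mapPoint_mapPoint, b3, b1],
        by rw [← mapPoint_mapPoint, b2, b3]⟩
  have du1 : mapPoint (u.trans u) P12 = P13 := by rw [← mapPoint_mapPoint, cu1, cu2]
  have du2 : mapPoint (u.trans u) P23 = P12 := by rw [← mapPoint_mapPoint, cu2, cu3]
  have du3 : mapPoint (u.trans u) P13 = P23 := by rw [← mapPoint_mapPoint, cu3, cu1]
  refine ⟨goal1, goalcard, ?_⟩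
  intro p hp q hq
  rw [goal2] at hp hq
  have hp' : p = P12 ∨ p = P13 ∨ p = P23 := by simpa using hp
  have hq' : q = P12 ∨ q = P13 ∨ q = P23 := by simpa using hq
  rcases hp' with rfl | rfl | rfl <;> rcases hq' with rfl | rfl | rfl
  · exact ⟨AlgEquiv.refl, mapPoint_refl _⟩
  · exact ⟨u.trans u, du1⟩
  · exact ⟨u, cu1⟩
  · exact ⟨u, cu3⟩
  · exact ⟨AlgEquiv.refl, mapPoint_refl _⟩
  · exact ⟨u.trans u, du3⟩
  · exact ⟨u.trans u, du2⟩
  · exact ⟨u, cu2⟩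
  · exact ⟨AlgEquiv.refl, mapPoint_refl _⟩
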